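/- Let (M,d) be a metric space and μ a finite measure on M with μ(M) > 0 that is c-doubling for some c ≥ 1. Suppose the diameter of M equals Δ > 0 and is attained, i.e. there exist u, v ∈ M with d(u,v) = Δ and d(p,q) ≤ Δ for all p,q ∈ M. Then for every point p ∈ M and every radius ρ ≤ (3/16)·Δ, μ(B̄(p,ρ)) ≤ (1 − 1/c²)·μ(M). -/
import Mathlib


open MeasureTheory Metric
open scoped NNReal ENNReal

theorem stmt_6 {M : Type*} [MetricSpace M] [MeasurableSpace M] [BorelSpace M]
    (μ : Measure M) [IsFiniteMeasure μ] (hpos : 0 < μ Set.univ)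
    (c : ℝ≥0) (hc : 1 ≤ c)
    (hdbl : ∀ (x : M) (r : ℝ), 0 < r →
      μ (closedBall x (2 * r)) ≤ c * μ (closedBall x r))
    (Δ : ℝ) (hΔ : 0 < Δ) (u v : M) (huv : dist u v = Δ)
    (hdiam : ∀ p q : M, dist p q ≤ Δ)
    (p : M) (ρ : ℝ) (hρ : ρ ≤ 3 / 16 * Δ) :
    μ (closedBall p ρ) ≤ (1 - ((c : ℝ≥0∞))⁻¹ ^ 2) * μ Set.univ := by
  -- choose a diameter endpoint far from p
  obtain ⟨w, hw⟩ : ∃ w : M, Δ / 2 ≤ dist p w := by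
    by_contra h
    push_neg at h
    have := calc Δ = dist u v := huv.symm
      _ ≤ dist u p + dist p v := dist_triangle _ _ _
      _ = dist p u + dist p v := by rw [dist_comm]
      _ < Δ / 2 + Δ / 2 := by exact add_lt_add (h u) (h v)
      _ = Δ := by ring
    exact lt_irrefl _ this
  have hcne : (c : ℝ≥0∞) ≠ 0 := by
    simpa using (lt_of_lt_of_le zero_lt_one hc).ne'
  have hcnetop : (c : ℝ≥0∞) ≠ ⊤ := ENNReal.coe_ne_top
  have hT : μ Set.univ ≠ ⊤ := measure_ne_top μ _
  -- the whole space is the ball of radius Δ around w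
  have huniv : μ Set.univ ≤ (c : ℝ≥0∞) ^ 2 * μ (closedBall w (Δ / 4)) := by
    have h1 : Set.univ ⊆ closedBall w (2 * (Δ / 2)) := by
      intro x _
      simp only [mem_closedBall]
      calc dist x w ≤ Δ := hdiam _ _
        _ = 2 * (Δ / 2) := by ring
    have h2 : μ (closedBall w (2 * (Δ / 2))) ≤ c * μ (closedBall w (Δ / 2)) :=
      hdbl w (Δ / 2) (by linarith)
    have h3 : μ (closedBall w (2 * (Δ / 4))) ≤ c * μ (closedBall w (Δ / 4)) :=
      hdbl w (Δ / 4) (by linarith)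
    have h4 : (Δ / 2) = 2 * (Δ / 4) := by ring
    calc μ Set.univ ≤ μ (closedBall w (2 * (Δ / 2))) := measure_mono h1
      _ ≤ c * μ (closedBall w (Δ / 2)) := h2
      _ = c * μ (closedBall w (2 * (Δ / 4))) := by rw [h4]
      _ ≤ c * (c * μ (closedBall w (Δ / 4))) := by
          exact mul_le_mul_right h3 _
      _ = (c : ℝ≥0∞) ^ 2 * μ (closedBall w (Δ / 4)) := by ring
  -- disjointness
  have hdisj : Disjoint (closedBall p ρ) (closedBall w (Δ / 4)) := by
    rw [Set.disjoint_left]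
    intro x hx hx'
    simp only [mem_closedBall] at hx hx'
    have : dist p w ≤ ρ + Δ / 4 := by
      calc dist p w ≤ dist p x + dist x w := dist_triangle _ _ _
        _ ≤ ρ + Δ / 4 := by
            have := dist_comm p x
            linarith [hx, hx']
    linarith
  have hsum : μ (closedBall p ρ) + μ (closedBall w (Δ / 4)) ≤ μ Set.univ := by
    rw [← measure_union hdisj measurableSet_closedBall]
    exact measure_mono (Set.subset_univ _)
  have hball : ((c : ℝ≥0∞))⁻¹ ^ 2 * μ Set.univ ≤ μ (closedBall w (Δ / 4)) := by
    rw [← ENNReal.inv_pow]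
    rw [← ENNReal.div_eq_inv_mul]
    exact ENNReal.div_le_of_le_mul' huniv
  have key : μ (closedBall p ρ) ≤ μ Set.univ - ((c : ℝ≥0∞))⁻¹ ^ 2 * μ Set.univ := by
    have h1 : μ (closedBall p ρ) ≤ μ Set.univ - μ (closedBall w (Δ / 4)) :=
      ENNReal.le_sub_of_add_le_right (measure_ne_top μ _) hsum
    exact h1.trans (tsub_le_tsub_left hball _)
  refine key.trans (le_of_eq ?_)
  rw [ENNReal.sub_mul (fun _ _ => hT), one_mul]
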